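/- Let p be an odd prime, N ∈ {1, 2, 4, 5}, and θ = 2Np + 1 a prime. If θ satisfies Condition 2-N-p for p, then θ satisfies Condition N-C for p; that is, there are no two nonzero consecutive p-th power residues modulo θ. -/

import Mathlib

/-- For N ∈ {1, 2, 4, 5} and θ = 2Np + 1 prime: if 2 is not a p-th power
residue modulo θ (Condition 2-N-p), then there are no two nonzero consecutive
p-th power residues modulo θ (Condition N-C). -/
theorem NC_for_small_N
    (p N : ℕ) (hp : p.Prime) (hpodd : Odd p)
    (hNval : N = 1 ∨ N = 2 ∨ N = 4 ∨ N = 5)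
    (hθ : (2 * N * p + 1).Prime)
    (h2Np : ¬ ∃ c : ℤ, c ^ p ≡ 2 [ZMOD ((2 * N * p + 1 : ℕ) : ℤ)]) :
    ¬ ∃ a b : ℤ, ¬ ((2 * N * p + 1 : ℕ) : ℤ) ∣ a ∧ ¬ ((2 * N * p + 1 : ℕ) : ℤ) ∣ b ∧
      b ^ p ≡ a ^ p + 1 [ZMOD ((2 * N * p + 1 : ℕ) : ℤ)] := by
  rintro ⟨a, b, hda, hdb, hmod⟩
  haveI : Fact (2 * N * p + 1).Prime := ⟨hθ⟩
  set θ : ℕ := 2 * N * p + 1 with hθdef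
  -- move to the field K = ZMod θ
  have ha0 : ((a : ZMod θ)) ≠ 0 := by
    rw [Ne, ZMod.intCast_zmod_eq_zero_iff_dvd]; exact hda
  have hb0 : ((b : ZMod θ)) ≠ 0 := by
    rw [Ne, ZMod.intCast_zmod_eq_zero_iff_dvd]; exact hdb
  set u : ZMod θ := (a : ZMod θ) ^ p with hu
  have hv : ((b : ZMod θ)) ^ p = u + 1 := by
    have := (ZMod.intCast_eq_intCast_iff _ _ _).mpr hmod
    push_cast at this
    simpa [hu] using this
  -- Fermat: every nonzero p-th power is a (2N)-th root of unity
  have fermat : ∀ x : ZMod θ, x ≠ 0 → (x ^ p) ^ (2 * N) = 1 := by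
    intro x hx
    have h := ZMod.pow_card_sub_one_eq_one hx
    have hcard : θ - 1 = p * (2 * N) := by simp [hθdef]; ring
    rw [← pow_mul, ← hcard, h]
  have e1 : u ^ (2 * N) = 1 := fermat _ ha0
  have e2 : (u + 1) ^ (2 * N) = 1 := by rw [← hv]; exact fermat _ hb0
  -- Bezout identities in ℤ[x] give 2 ^ (2N) = 1 in ZMod θ
  have h2pow : (2 : ZMod θ) ^ (2 * N) = 1 := by
    rcases hNval with rfl | rfl | rfl | rfl
    · rw [show 2*1 = 2 from rfl] at e1 e2 ⊢
      linear_combination (-3 - 2 * u) * e1 + (-1 + 2 * u) * e2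
    · rw [show 2*2 = 4 from rfl] at e1 e2 ⊢
      linear_combination (-15 - 20 * u - 14 * u ^ 2 - 4 * u ^ 3) * e1 +
        (-5 + 4 * u - 2 * u ^ 2 + 4 * u ^ 3) * e2
    · rw [show 2*4 = 8 from rfl] at e1 e2 ⊢
      linear_combination
        (-255 - 680 * u - 1804 * u ^ 2 - 3032 * u ^ 3 - 2990 * u ^ 4 - 1720 * u ^ 5
          - 540 * u ^ 6 - 72 * u ^ 7) * e1 +
        (-85 + 72 * u - 36 * u ^ 2 - 8 * u ^ 3 + 30 * u ^ 4 - 8 * u ^ 5 - 36 * u ^ 6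
          + 72 * u ^ 7) * e2
    · rw [show 2*5 = 10 from rfl] at e1 e2 ⊢
      linear_combination
        (-1023 - 3410 * u - 12545 * u ^ 2 - 29720 * u ^ 3 - 44210 * u ^ 4 - 42932 * u ^ 5
          - 27455 * u ^ 6 - 11210 * u ^ 7 - 2660 * u ^ 8 - 280 * u ^ 9) * e1 +
        (-341 + 280 * u - 140 * u ^ 2 + 10 * u ^ 3 + 55 * u ^ 4 - 68 * u ^ 5 + 55 * u ^ 6
          + 10 * u ^ 7 - 140 * u ^ 8 + 280 * u ^ 9) * e2
  -- p is coprime to 2N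
  have hp2 : p ≠ 2 := by rintro rfl; exact (Nat.not_odd_iff_even.mpr (by norm_num)) hpodd
  have hcop : Nat.Coprime p (2 * N) := by
    have hpd2 : ¬ p ∣ 2 := fun h =>
      hp2 ((Nat.prime_dvd_prime_iff_eq hp Nat.prime_two).mp h)
    rcases hNval with rfl | rfl | rfl | rfl
    · simpa using hp.coprime_iff_not_dvd.mpr hpd2
    · refine Nat.Coprime.mul_right (hp.coprime_iff_not_dvd.mpr hpd2)
        (hp.coprime_iff_not_dvd.mpr ?_)
      intro h
      exact hp2 ((Nat.prime_dvd_prime_iff_eq hp Nat.prime_two).mp h)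
    · refine Nat.Coprime.mul_right (hp.coprime_iff_not_dvd.mpr hpd2) ?_
      refine Nat.Coprime.mul_right (hp.coprime_iff_not_dvd.mpr hpd2)
        (hp.coprime_iff_not_dvd.mpr hpd2)
    · refine Nat.Coprime.mul_right (hp.coprime_iff_not_dvd.mpr hpd2)
        (hp.coprime_iff_not_dvd.mpr ?_)
      intro h
      have hp5 : p = 5 := (Nat.prime_dvd_prime_iff_eq hp (by norm_num)).mp h
      subst hp5
      norm_num at hθ
  -- extract a p-th root of 2
  have h2N1 : 1 < 2 * N := by rcases hNval with rfl | rfl | rfl | rfl <;> norm_num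
  obtain ⟨x, -, hx⟩ := Nat.exists_mul_mod_eq_one_of_coprime hcop h2N1
  have hk : p * x = 2 * N * (p * x / (2 * N)) + 1 := by
    have := Nat.div_add_mod (p * x) (2 * N)
    omega
  refine h2Np ⟨(2 : ℤ) ^ x, ?_⟩
  rw [← ZMod.intCast_eq_intCast_iff]
  push_cast
  rw [← pow_mul, mul_comm x p, hk, pow_add, pow_mul, h2pow, one_pow, pow_one, one_mul]
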